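/- Let t ≥ 2 be an integer and let z_1, …, z_t ∈ 𝔹. Then there exists an index j with 2 ≤ j ≤ t such that, writing w_1, …, w_{t−1} for the sequence obtained from z_1, …, z_t by deleting the entry z_j (and keeping the order of the remaining entries), one has V_ν(z_1,…,z_t) ≤ V_ν(w_1,…,w_{t−1}) + r_t^ν. -/

import Mathlib

open Metric MeasureTheory ENNReal

/-- `V d ν T z = Σ_{t=2}^T (min_{1 ≤ i < t} ‖z t - z i‖) ^ ν`, where `^` is the real power. -/
noncomputable def V (d : ℕ) (ν : ℝ) (T : ℕ) (z : ℕ → EuclideanSpace ℝ (Fin d)) : ℝ :=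
  ∑ t ∈ Finset.Icc 2 T, (sInf ((fun i => ‖z t - z i‖) '' Set.Ico 1 t)) ^ ν

open MeasureTheory ENNReal in
private 
lemma packing_aux (d : ℕ) (t : ℕ)
    (z : ℕ → EuclideanSpace ℝ (Fin d))
    (hz : ∀ i, 1 ≤ i → i ≤ t → ‖z i‖ ≤ 1/2)
    (m : ℝ) (hm : 0 < m)
    (hsep : ∀ i j, 1 ≤ i → i < j → j ≤ t → m ≤ ‖z j - z i‖) :
    (t : ℝ) * (m/2)^d ≤ ((1+m)/2)^d := by
  classical
  set μ := (volume : Measure (EuclideanSpace ℝ (Fin d))) with hμ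
  have hdisj : (↑(Finset.Icc 1 t) : Set ℕ).PairwiseDisjoint
      (fun i => Metric.ball (z i) (m/2)) := by
    have key : ∀ a b, 1 ≤ a → a < b → b ≤ t →
        Disjoint (Metric.ball (z a) (m/2)) (Metric.ball (z b) (m/2)) := by
      intro a b ha hab hb
      apply Metric.ball_disjoint_ball
      have h1 := hsep a b ha hab hb
      rw [dist_eq_norm, norm_sub_rev]
      linarith
    intro i hi j hj hij
    simp only [Finset.coe_Icc, Set.mem_Icc] at hi hj
    rcases lt_or_gt_of_ne hij with h | h
    · exact key i j hi.1 h hj.2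
    · exact (key j i hj.1 h hi.2).symm
  have hsub : (⋃ i ∈ Finset.Icc 1 t, Metric.ball (z i) (m/2)) ⊆
      Metric.ball (0 : EuclideanSpace ℝ (Fin d)) ((1+m)/2) := by
    intro y hy
    simp only [Set.mem_iUnion, Finset.mem_Icc, Metric.mem_ball] at hy ⊢
    obtain ⟨i, hi, hyi⟩ := hy
    have h1 := hz i hi.1 hi.2
    have h2 : ‖y - z i‖ < m/2 := by rw [← dist_eq_norm]; exact hyi
    have : ‖y‖ ≤ ‖y - z i‖ + ‖z i‖ := by
      calc ‖y‖ = ‖(y - z i) + z i‖ := by rw [sub_add_cancel]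
      _ ≤ ‖y - z i‖ + ‖z i‖ := norm_add_le _ _
    rw [dist_zero_right]
    linarith
  have hfr : Module.finrank ℝ (EuclideanSpace ℝ (Fin d)) = d := finrank_euclideanSpace_fin
  have hb : ∀ i : ℕ, μ (Metric.ball (z i) (m/2))
      = ENNReal.ofReal ((m/2)^d) * μ (Metric.ball 0 1) := by
    intro i
    rw [Measure.addHaar_ball_of_pos μ _ (by positivity : (0:ℝ) < m/2), hfr]
  have hsum : ∑ i ∈ Finset.Icc 1 t, μ (Metric.ball (z i) (m/2))
      = μ (⋃ i ∈ Finset.Icc 1 t, Metric.ball (z i) (m/2)) :=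
    (measure_biUnion_finset hdisj (fun i _ => measurableSet_ball)).symm
  have hcard : (Finset.Icc 1 t).card = t := by rw [Nat.card_Icc]; omega
  have hle : (t : ℝ≥0∞) * ENNReal.ofReal ((m/2)^d) * μ (Metric.ball 0 1)
      ≤ ENNReal.ofReal (((1+m)/2)^d) * μ (Metric.ball 0 1) := by
    calc (t : ℝ≥0∞) * ENNReal.ofReal ((m/2)^d) * μ (Metric.ball 0 1)
        = ∑ i ∈ Finset.Icc 1 t, μ (Metric.ball (z i) (m/2)) := by
          rw [Finset.sum_congr rfl (fun i _ => hb i), Finset.sum_const, hcard,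
            nsmul_eq_mul, mul_assoc]
      _ = μ (⋃ i ∈ Finset.Icc 1 t, Metric.ball (z i) (m/2)) := hsum
      _ ≤ μ (Metric.ball (0 : EuclideanSpace ℝ (Fin d)) ((1+m)/2)) := measure_mono hsub
      _ = ENNReal.ofReal (((1+m)/2)^d) * μ (Metric.ball 0 1) := by
          rw [Measure.addHaar_ball_of_pos μ _ (by positivity : (0:ℝ) < (1+m)/2), hfr]
  have h0 : μ (Metric.ball (0 : EuclideanSpace ℝ (Fin d)) 1) ≠ 0 :=
    (measure_ball_pos μ _ one_pos).ne'
  have htop : μ (Metric.ball (0 : EuclideanSpace ℝ (Fin d)) 1) ≠ ⊤ :=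
    measure_ball_lt_top.ne
  have hle2 : (t : ℝ≥0∞) * ENNReal.ofReal ((m/2)^d) ≤ ENNReal.ofReal (((1+m)/2)^d) :=
    (ENNReal.mul_le_mul_iff_left h0 htop).mp hle
  have hle3 : ENNReal.ofReal ((t:ℝ) * (m/2)^d) ≤ ENNReal.ofReal (((1+m)/2)^d) := by
    rwa [ENNReal.ofReal_mul (by positivity : (0:ℝ) ≤ (t:ℝ)), ENNReal.ofReal_natCast]
  exact (ENNReal.ofReal_le_ofReal_iff (by positivity)).mp hle3

/-- **Recursive step.** For `t ≥ 2` points `z_1, …, z_t` in the ball of diameter 1, one can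
delete an entry `z_j` (for some `2 ≤ j ≤ t`) from the sequence so that, with
`w_1, …, w_{t-1}` the remaining entries in order,
`V_ν(z_1,…,z_t) ≤ V_ν(w_1,…,w_{t-1}) + r_t^ν`, where `r_t = 1/(t^{1/d} - 1)`. -/
theorem V_le_V_erase_add
    (d : ℕ) (hd : 0 < d) (ν : ℝ) (hν : 0 < ν) (t : ℕ) (ht : 2 ≤ t)
    (z : ℕ → EuclideanSpace ℝ (Fin d))
    (hz : ∀ i, 1 ≤ i → i ≤ t →
      z i ∈ closedBall (0 : EuclideanSpace ℝ (Fin d)) (1 / 2)) :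
    ∃ j, 2 ≤ j ∧ j ≤ t ∧
      V d ν t z ≤ V d ν (t - 1) (fun i => if i < j then z i else z (i + 1)) +
        (1 / ((t : ℝ) ^ (1 / (d : ℝ)) - 1)) ^ ν := by
  classical
  set r : ℝ := 1 / ((t:ℝ) ^ (1/(d:ℝ)) - 1) with hr_def
  set f : ℕ → ℝ := fun s => sInf ((fun i => ‖z s - z i‖) '' Set.Ico 1 s) with hf
  have hz' : ∀ i, 1 ≤ i → i ≤ t → ‖z i‖ ≤ 1/2 := by
    intro i h1 h2
    have := hz i h1 h2
    rwa [mem_closedBall, dist_zero_right] at this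
  have hdR : (0:ℝ) < 1/(d:ℝ) := by
    have : (0:ℝ) < (d:ℝ) := by exact_mod_cast hd
    positivity
  have htR : (1:ℝ) < (t:ℝ) := by
    have : (1:ℕ) < t := by omega
    exact_mod_cast this
  have htpow : 1 < (t:ℝ) ^ (1/(d:ℝ)) :=
    (Real.one_lt_rpow_iff_of_pos (by linarith)).mpr (Or.inl ⟨htR, hdR⟩)
  have hr_pos : 0 < r := by
    rw [hr_def]
    have : (0:ℝ) < (t:ℝ) ^ (1/(d:ℝ)) - 1 := by linarith
    positivity
  have hf_nonneg : ∀ s, 0 ≤ f s := by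
    intro s
    apply Real.sInf_nonneg
    rintro x ⟨i, _, rfl⟩
    exact norm_nonneg _
  -- f s ≤ ‖z s - z i‖ for i ∈ [1, s)
  have hf_le : ∀ s i, 1 ≤ i → i < s → f s ≤ ‖z s - z i‖ := by
    intro s i h1 h2
    apply csInf_le ((Set.finite_Ico 1 s).image _).bddBelow
    exact ⟨i, ⟨h1, h2⟩, rfl⟩
  -- Step 1: there exists j ∈ [2, t] with f j ≤ r
  have hex : ∃ j, 2 ≤ j ∧ j ≤ t ∧ f j ≤ r := by
    by_contra hcon
    push_neg at hcon
    have hSne : (Finset.Icc 2 t).Nonempty := ⟨2, by simp [ht]⟩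
    have hSne' : ((Finset.Icc 2 t).image f).Nonempty := hSne.image f
    set m : ℝ := ((Finset.Icc 2 t).image f).min' hSne' with hm_def
    obtain ⟨j₀, hj₀, hfj₀⟩ := Finset.mem_image.mp (Finset.min'_mem _ hSne')
    rw [Finset.mem_Icc] at hj₀
    have hrm : r < m := by
      have h := hcon j₀ hj₀.1 hj₀.2
      rwa [hfj₀, ← hm_def] at h
    have hm_pos : 0 < m := lt_trans hr_pos hrm
    have hm_le : ∀ s, 2 ≤ s → s ≤ t → m ≤ f s := by
      intro s h1 h2
      exact Finset.min'_le _ _ (Finset.mem_image_of_mem f (Finset.mem_Icc.mpr ⟨h1, h2⟩))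
    have hsep : ∀ i j, 1 ≤ i → i < j → j ≤ t → m ≤ ‖z j - z i‖ := by
      intro i j h1 h2 h3
      exact le_trans (hm_le j (by omega) h3) (hf_le j i h1 h2)
    have hpack := packing_aux d t z hz' m hm_pos hsep
    -- derive contradiction
    have hstep : (t:ℝ) ≤ ((1+m)/m)^d := by
      have hpow : (0:ℝ) < (m/2)^d := by positivity
      have h2 : (1+m)/2 / (m/2) = (1+m)/m := by field_simp
      calc (t:ℝ) ≤ ((1+m)/2)^d / (m/2)^d := (le_div_iff₀ hpow).mpr hpack
        _ = ((1+m)/2 / (m/2))^d := (div_pow _ _ _).symm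
        _ = ((1+m)/m)^d := by rw [h2]
    have hrpow : (t:ℝ) ^ (1/(d:ℝ)) ≤ (1+m)/m := by
      have hb : (0:ℝ) ≤ (1+m)/m := by positivity
      have h1 : (t:ℝ) ^ (1/(d:ℝ)) ≤ (((1+m)/m)^d) ^ (1/(d:ℝ)) :=
        Real.rpow_le_rpow (by positivity) hstep hdR.le
      rwa [← Real.rpow_natCast ((1+m)/m) d, ← Real.rpow_mul hb,
        mul_one_div_cancel (by exact_mod_cast hd.ne' : (d:ℝ) ≠ 0), Real.rpow_one] at h1
    have hinv : 1/m < (t:ℝ) ^ (1/(d:ℝ)) - 1 := by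
      have := one_div_lt_one_div_of_lt hr_pos hrm
      rwa [hr_def, one_div_one_div] at this
    have heq : (1+m)/m = 1/m + 1 := by field_simp
    rw [heq] at hrpow
    linarith
  obtain ⟨j, hj2, hjt, hfj⟩ := hex
  refine ⟨j, hj2, hjt, ?_⟩
  set w : ℕ → EuclideanSpace ℝ (Fin d) := fun i => if i < j then z i else z (i + 1) with hw
  set g : ℕ → ℝ := fun s => sInf ((fun i => ‖w s - w i‖) '' Set.Ico 1 s) with hg
  have hjmem : j ∈ Finset.Icc 2 t := Finset.mem_Icc.mpr ⟨hj2, hjt⟩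
  -- (A) for s < j, g s = f s
  have hA : ∀ s, s < j → g s = f s := by
    intro s hs
    have : (fun i => ‖w s - w i‖) '' Set.Ico 1 s = (fun i => ‖z s - z i‖) '' Set.Ico 1 s := by
      apply Set.image_congr
      intro i hi
      simp only [Set.mem_Ico] at hi
      have hws : w s = z s := by simp [hw, hs]
      have hwi : w i = z i := by simp [hw, show i < j by omega]
      rw [hws, hwi]
    rw [hg, hf]
    simp only
    rw [this]
  -- (B) for j < s ≤ t, f s ≤ g (s - 1)
  have hB : ∀ s, j < s → f s ≤ g (s - 1) := by
    intro s hs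
    have h2s : 2 ≤ s := by omega
    apply csInf_le_csInf ((Set.finite_Ico 1 s).image _).bddBelow
    · -- nonempty: Ico 1 (s-1) nonempty since s - 1 ≥ 2 ≥ 1... need 1 < s - 1? need 1 ≤ i < s-1 nonempty: s-1 ≥ 2
      have : (1 : ℕ) ∈ Set.Ico 1 (s - 1) := by
        simp only [Set.mem_Ico]
        omega
      exact ⟨_, Set.mem_image_of_mem _ this⟩
    · rintro x ⟨i, hi, rfl⟩
      simp only [Set.mem_Ico] at hi
      have hws : w (s - 1) = z s := by
        have h1 : ¬ (s - 1 < j) := by omega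
        simp only [hw, if_neg h1]
        rw [show s - 1 + 1 = s by omega]
      by_cases hij : i < j
      · have his : i ∈ Set.Ico 1 s := Set.mem_Ico.mpr ⟨hi.1, by omega⟩
        refine ⟨i, his, ?_⟩
        rw [hws]
        simp [hw, hij]
      · have his : i + 1 ∈ Set.Ico 1 s := Set.mem_Ico.mpr ⟨by omega, by omega⟩
        refine ⟨i + 1, his, ?_⟩
        rw [hws]
        simp [hw, hij]
  -- sum manipulation
  have hVz : V d ν t z = f j ^ ν + ∑ s ∈ (Finset.Icc 2 t).erase j, f s ^ ν :=
    (Finset.add_sum_erase _ (fun s => f s ^ ν) hjmem).symm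
  have hVw : V d ν (t-1) w = ∑ s ∈ (Finset.Icc 2 t).erase j,
      g (if s < j then s else s - 1) ^ ν := by
    rw [show V d ν (t-1) w = ∑ s ∈ Finset.Icc 2 (t-1), g s ^ ν from rfl]
    refine Finset.sum_nbij' (fun s => if s < j then s else s + 1)
      (fun s => if s < j then s else s - 1) ?_ ?_ ?_ ?_ ?_
    · intro a ha
      rw [Finset.mem_Icc] at ha
      rw [Finset.mem_erase, Finset.mem_Icc]
      by_cases h : a < j
      · simp only [if_pos h]; omega
      · simp only [if_neg h]; omega
    · intro a ha
      rw [Finset.mem_erase, Finset.mem_Icc] at ha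
      rw [Finset.mem_Icc]
      by_cases h : a < j
      · simp only [if_pos h]; omega
      · simp only [if_neg h]; omega
    · intro a ha
      by_cases h : a < j
      · simp [h]
      · have h1 : ¬ (a + 1 < j) := by omega
        simp only [if_neg h, if_neg h1]
        omega
    · intro a ha
      rw [Finset.mem_erase, Finset.mem_Icc] at ha
      by_cases h : a < j
      · simp only [if_pos h]
      · simp only [if_neg h, if_neg (show ¬ (a - 1 < j) by omega)]
        omega
    · intro a ha
      rw [Finset.mem_Icc] at ha
      by_cases h : a < j
      · simp [h]
      · have h1 : ¬ (a + 1 < j) := by omega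
        simp only [if_neg h, if_neg h1]
        congr 2
  have hterm : ∀ s ∈ (Finset.Icc 2 t).erase j,
      f s ^ ν ≤ g (if s < j then s else s - 1) ^ ν := by
    intro s hs
    rw [Finset.mem_erase, Finset.mem_Icc] at hs
    by_cases h : s < j
    · rw [if_pos h, hA s h]
    · rw [if_neg h]
      have hlt : j < s := by omega
      exact Real.rpow_le_rpow (hf_nonneg s) (hB s hlt) hν.le
  calc V d ν t z = f j ^ ν + ∑ s ∈ (Finset.Icc 2 t).erase j, f s ^ ν := hVz
    _ ≤ f j ^ ν + ∑ s ∈ (Finset.Icc 2 t).erase j, g (if s < j then s else s - 1) ^ ν := by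
        exact add_le_add_right (Finset.sum_le_sum hterm) _
    _ = f j ^ ν + V d ν (t-1) w := by rw [hVw]
    _ ≤ r ^ ν + V d ν (t-1) w := by
        exact add_le_add_left (Real.rpow_le_rpow (hf_nonneg j) hfj hν.le) _
    _ = V d ν (t-1) w + r ^ ν := add_comm _ _
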